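/- There exist constants C₁, C₂ > 0, depending only on Φ and M, such that for all ρ ∈ F_M^r: H_C^r(ρ) ≥ ∫ Φ(ρ) dx − C₁ − C₂ (∫ Φ(ρ) dx)^{n/3}. In particular, since n < 3, the infimum h_M^r := inf_{ρ ∈ F_M^r} H_C^r(ρ) is finite (h_M^r > −∞). -/

import Mathlib

open MeasureTheory Real Filter Topology

noncomputable section

abbrev Space : Type := EuclideanSpace ℝ (Fin 3)

/-- Induced gravitational potential `U_ρ = -ρ ∗ 1/|·|`. -/
def Upot (ρ : Space → ℝ) : Space → ℝ := fun x => - ∫ y : Space, ρ y / ‖x - y‖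

/-- Induced gravitational field `∇U_ρ`. -/
def gradU (ρ : Space → ℝ) : Space → Space := fun x => gradient (Upot ρ) x

/-- Potential energy. -/
def Epot (ρ : Space → ℝ) : ℝ :=
  -(1/2) * ∫ x : Space, ∫ y : Space, ρ x * ρ y / ‖x - y‖

/-- The reduced energy-Casimir functional `H_C^r(ρ) = ∫ Φ(ρ) + E_pot(ρ)`. -/
def HCr (Φ : ℝ → ℝ) (ρ : Space → ℝ) : ℝ := (∫ x : Space, Φ (ρ x)) + Epot ρ

/-- The reduced constraint set `F_M^r = {ρ ∈ L¹₊ : ∫ Φ(ρ) < ∞, ∫ ρ = M}`. -/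
def FMr (Φ : ℝ → ℝ) (M : ℝ) : Set (Space → ℝ) :=
  {ρ | (∀ x, 0 ≤ ρ x) ∧ Integrable ρ ∧
       Integrable (fun x => Φ (ρ x)) ∧ (∫ x : Space, ρ x) = M}

/-- The infimum `h_M^r` of `H_C^r` over `F_M^r`. -/
def hMr (Φ : ℝ → ℝ) (M : ℝ) : ℝ := sInf (HCr Φ '' FMr Φ M)

/-- Assumptions on `Φ`: `Φ ∈ C¹([0,∞))` with derivative `Φ'`, `Φ(0) = Φ'(0) = 0`,
strictly convex, `Φ(r) ≥ C r^{1+1/n}` for large `r` with `0 < n < 3`, and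
`Φ(r) ≤ C r^{1+1/n'}` for small `r` with `0 < n' < 3`. -/
structure PhiHyp (Φ Φ' : ℝ → ℝ) (n n' : ℝ) : Prop where
  n_pos : 0 < n
  n_lt_three : n < 3
  n'_pos : 0 < n'
  n'_lt_three : n' < 3
  hasDeriv : ∀ r ∈ Set.Ici (0:ℝ), HasDerivWithinAt Φ (Φ' r) (Set.Ici 0) r
  contDeriv : ContinuousOn Φ' (Set.Ici 0)
  zero : Φ 0 = 0
  derivZero : Φ' 0 = 0
  strictConvex : StrictConvexOn ℝ (Set.Ici 0) Φ
  growth : ∃ C > (0:ℝ), ∃ r₁ : ℝ, ∀ r : ℝ, r₁ ≤ r → C * r ^ (1 + 1/n) ≤ Φ r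
  small : ∃ C > (0:ℝ), ∃ r₁ > (0:ℝ), ∀ r : ℝ, 0 ≤ r → r ≤ r₁ → Φ r ≤ C * r ^ (1 + 1/n')

/-! ### Auxiliary lemmas -/

section Aux

open Metric
open scoped ENNReal NNReal

lemma real_rpow_add_le (x y p : ℝ) (hx : 0 ≤ x) (hy : 0 ≤ y) (hp0 : 0 ≤ p) (hp1 : p ≤ 1) :
    (x + y) ^ p ≤ x ^ p + y ^ p := by
  have h := NNReal.rpow_add_le_add_rpow (x.toNNReal) (y.toNNReal) hp0 hp1
  have h2 : ((x.toNNReal + y.toNNReal) ^ p : ℝ≥0) = ((x+y).toNNReal) ^ p := by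
    rw [Real.toNNReal_add hx hy]
  rw [h2] at h
  have := (NNReal.coe_le_coe).2 h
  simpa [NNReal.coe_rpow, Real.coe_toNNReal _ (by positivity : (0:ℝ) ≤ x + y),
    Real.coe_toNNReal _ hx, Real.coe_toNNReal _ hy] using this

lemma ofReal_integral_le' {α : Type*} [MeasurableSpace α] {μ : Measure α} (g : α → ℝ)
    (hg : ∀ x, 0 ≤ g x) : ENNReal.ofReal (∫ x, g x ∂μ) ≤ ∫⁻ x, ENNReal.ofReal (g x) ∂μ := by
  by_cases h : Integrable g μ
  · rw [← ofReal_integral_eq_lintegral_ofReal h (ae_of_all _ hg)]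
  · rw [integral_undef h]; simp

lemma Phi_nonneg {Φ Φ' : ℝ → ℝ} {n n' : ℝ} (hΦ : PhiHyp Φ Φ' n n') :
    ∀ r : ℝ, 0 ≤ r → 0 ≤ Φ r := by
  intro r hr
  rcases eq_or_lt_of_le hr with h | hr0
  · rw [← h, hΦ.zero]
  have hconv := hΦ.strictConvex.convexOn
  have hsl : ∀ s : ℝ, s ∈ Set.Ioo 0 r → slope Φ 0 s ≤ Φ r / r := by
    intro s hs
    have hs0 := hs.1
    have hsr := hs.2
    have hb0 : 0 ≤ s / r := by positivity
    have hb1 : s / r ≤ 1 := by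
      rw [div_le_one hr0]; exact hsr.le
    have := hconv.2 (Set.self_mem_Ici) (le_of_lt hr0 : (0:ℝ) ≤ r)
      (by linarith : (0:ℝ) ≤ 1 - s/r) hb0 (by ring)
    simp only [smul_eq_mul, mul_zero, zero_add, hΦ.zero, mul_zero] at this
    have hΦs : Φ s ≤ s / r * Φ r := by
      have hsr' : s / r * r = s := by field_simp
      rw [hsr'] at this
      linarith
    rw [slope_def_field, hΦ.zero, sub_zero, sub_zero]
    rw [div_le_div_iff₀ hs0 hr0]
    calc (Φ s) * r ≤ (s / r * Φ r) * r := by nlinarith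
      _ = Φ r * s := by field_simp
  have hder := hΦ.hasDeriv 0 Set.self_mem_Ici
  rw [hasDerivWithinAt_iff_tendsto_slope] at hder
  have hIci : Set.Ici (0:ℝ) \ {0} = Set.Ioi 0 := Set.Ici_sdiff_left
  rw [hIci, hΦ.derivZero] at hder
  have hle : (0:ℝ) ≤ Φ r / r := by
    refine le_of_tendsto hder ?_
    filter_upwards [Ioo_mem_nhdsGT_of_mem (by constructor <;> [exact le_refl 0; exact hr0] :
      (0:ℝ) ∈ Set.Ico 0 r)] with s hs
    exact hsl s hs
  nlinarith [mul_nonneg hle hr0.le, (by field_simp : Φ r / r * r = Φ r)]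

lemma kernel_bound (q : ℝ) (hq0 : 0 < q) (hq3 : q < 3) :
    ∃ c > (0:ℝ), ∀ R : ℝ, 0 < R →
      ∫⁻ z in ball (0:Space) R, (ENNReal.ofReal ‖z‖⁻¹) ^ q ≤ ENNReal.ofReal (c * R ^ (3 - q)) := by
  classical
  set mB := volume (ball (0:Space) 1) with hmB
  have hmBtop : mB ≠ ⊤ := measure_ball_lt_top.ne
  set θ : ℝ := (1/2 : ℝ) ^ (3 - q) with hθdef
  have hθ0 : 0 < θ := Real.rpow_pos_of_pos (by norm_num) _
  have hθ1 : θ < 1 := Real.rpow_lt_one (by norm_num) (by norm_num) (by linarith)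
  have h1θ : (0:ℝ) < 1 - θ := by linarith
  have hc0 : 0 ≤ 2 ^ q * mB.toReal * (1 - θ)⁻¹ :=
    mul_nonneg (mul_nonneg (Real.rpow_pos_of_pos two_pos q).le ENNReal.toReal_nonneg)
      (inv_nonneg.2 h1θ.le)
  refine ⟨2 ^ q * mB.toReal * (1 - θ)⁻¹ + 1, by linarith, ?_⟩
  intro R hR
  set s : ℕ → ℝ := fun j => R * (1/2 : ℝ)^j with hsdef
  have hs0 : ∀ j, 0 < s j := fun j => by positivity
  have hcov : ball (0:Space) R ⊆
      {0} ∪ ⋃ j : ℕ, (ball (0:Space) (s j) \ ball (0:Space) (s (j+1))) := by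
    intro z hz
    rcases eq_or_ne z 0 with rfl | hz0
    · exact Or.inl rfl
    right
    have hzpos : 0 < ‖z‖ := norm_pos_iff.2 hz0
    have hzR : ‖z‖ < R := by simpa [mem_ball_zero_iff] using hz
    have hex' : ∃ m : ℕ, s m ≤ ‖z‖ := by
      obtain ⟨m, hm⟩ := exists_pow_lt_of_lt_one (div_pos hzpos hR) (by norm_num : (1/2:ℝ) < 1)
      exact ⟨m, by rw [hsdef]; simp only []; rw [mul_comm]; exact le_of_lt ((lt_div_iff₀ hR).1 hm)⟩
    have hm : s (Nat.find hex') ≤ ‖z‖ := Nat.find_spec hex'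
    have hm0 : Nat.find hex' ≠ 0 := by
      intro h
      rw [h] at hm
      simp only [hsdef, pow_zero, mul_one] at hm
      linarith
    obtain ⟨j, hj⟩ : ∃ j, Nat.find hex' = j + 1 :=
      ⟨Nat.find hex' - 1, (Nat.succ_pred_eq_of_ne_zero hm0).symm⟩
    refine Set.mem_iUnion.2 ⟨j, ?_, ?_⟩
    · have hmin : ¬ s j ≤ ‖z‖ := Nat.find_min hex' (by omega)
      exact mem_ball_zero_iff.2 (lt_of_not_ge hmin)
    · have : s (j+1) ≤ ‖z‖ := hj ▸ hm
      simp only [mem_ball_zero_iff, not_lt]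
      exact this
  have hAj : ∀ j : ℕ,
      (∫⁻ z in (ball (0:Space) (s j) \ ball (0:Space) (s (j+1))),
        (ENNReal.ofReal ‖z‖⁻¹) ^ q)
      ≤ (ENNReal.ofReal (2 ^ q * R ^ (3 - q)) * mB) * ENNReal.ofReal θ ^ j := by
    intro j
    have hu : (0:ℝ) < (1/2:ℝ)^j := by positivity
    have hmeasA : MeasurableSet (ball (0:Space) (s j) \ ball (0:Space) (s (j+1))) :=
      measurableSet_ball.diff measurableSet_ball
    have hpt : ∀ z ∈ (ball (0:Space) (s j) \ ball (0:Space) (s (j+1))),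
        (ENNReal.ofReal ‖z‖⁻¹) ^ q ≤ ENNReal.ofReal ((s (j+1))⁻¹) ^ q := by
      intro z hz
      have h1 : s (j+1) ≤ ‖z‖ := by
        have := hz.2; simpa [mem_ball_zero_iff, not_lt] using this
      exact ENNReal.rpow_le_rpow (ENNReal.ofReal_le_ofReal
        (inv_anti₀ (hs0 _) h1)) hq0.le
    calc (∫⁻ z in (ball (0:Space) (s j) \ ball (0:Space) (s (j+1))), (ENNReal.ofReal ‖z‖⁻¹) ^ q)
        ≤ ∫⁻ _z in (ball (0:Space) (s j) \ ball (0:Space) (s (j+1))),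
            ENNReal.ofReal ((s (j+1))⁻¹) ^ q := setLIntegral_mono' hmeasA hpt
      _ = ENNReal.ofReal ((s (j+1))⁻¹) ^ q *
            volume (ball (0:Space) (s j) \ ball (0:Space) (s (j+1))) := by
          rw [setLIntegral_const]
      _ ≤ ENNReal.ofReal ((s (j+1))⁻¹) ^ q * volume (ball (0:Space) (s j)) := by
          gcongr
          exact Set.diff_subset
      _ = ENNReal.ofReal ((s (j+1))⁻¹ ^ q) * (ENNReal.ofReal ((s j) ^ 3) * mB) := by
          rw [ENNReal.ofReal_rpow_of_nonneg (by positivity) hq0.le,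
            Measure.addHaar_ball _ _ (hs0 j).le, finrank_euclideanSpace_fin]
      _ = ENNReal.ofReal ((s (j+1))⁻¹ ^ q * (s j) ^ 3) * mB := by
          rw [ENNReal.ofReal_mul (by positivity), mul_assoc]
      _ = (ENNReal.ofReal (2 ^ q * R ^ (3 - q)) * mB) * ENNReal.ofReal θ ^ j := by
          rw [← ENNReal.ofReal_pow hθ0.le, mul_comm _ (ENNReal.ofReal (θ ^ j)),
            ← mul_assoc, ← ENNReal.ofReal_mul (by positivity)]
          congr 2
          have e0 : s (j+1) = R * (1/2:ℝ)^j * (1/2) := by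
            rw [hsdef]; simp only []; rw [pow_succ]; ring
          have e1 : (s (j+1))⁻¹ ^ q = 2 ^ q * (R * (1/2:ℝ)^j) ^ (-q) := by
            rw [e0, show (R * (1/2:ℝ)^j * (1/2))⁻¹ = 2 * (R * (1/2:ℝ)^j)⁻¹ by
              field_simp,
              Real.mul_rpow (by norm_num) (by positivity),
              Real.inv_rpow (by positivity), ← Real.rpow_neg (by positivity)]
          have e2 : ((1/2:ℝ)^j) ^ ((3:ℝ) - q) = θ ^ j := by
            rw [← Real.rpow_natCast (1/2:ℝ) j, ← Real.rpow_mul (by norm_num), mul_comm,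
              Real.rpow_mul (by norm_num), Real.rpow_natCast]
          have e3 : s j = R * (1/2:ℝ)^j := rfl
          rw [e3, e1, ← Real.rpow_natCast (R * (1/2:ℝ)^j) 3]
          rw [mul_assoc, ← Real.rpow_add (by positivity)]
          rw [show (-q) + ((3:ℕ):ℝ) = 3 - q by push_cast; ring]
          rw [Real.mul_rpow hR.le hu.le, e2]
          ring
  calc (∫⁻ z in ball (0:Space) R, (ENNReal.ofReal ‖z‖⁻¹) ^ q)
      ≤ ∫⁻ z in ({0} ∪ ⋃ j : ℕ, (ball (0:Space) (s j) \ ball (0:Space) (s (j+1)))),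
          (ENNReal.ofReal ‖z‖⁻¹) ^ q := lintegral_mono_set hcov
    _ ≤ (∫⁻ z in ({0} : Set Space), (ENNReal.ofReal ‖z‖⁻¹) ^ q)
        + ∫⁻ z in (⋃ j : ℕ, (ball (0:Space) (s j) \ ball (0:Space) (s (j+1)))),
          (ENNReal.ofReal ‖z‖⁻¹) ^ q := lintegral_union_le _ _ _
    _ = ∫⁻ z in (⋃ j : ℕ, (ball (0:Space) (s j) \ ball (0:Space) (s (j+1)))),
          (ENNReal.ofReal ‖z‖⁻¹) ^ q := by
        rw [setLIntegral_measure_zero _ _ (measure_singleton 0), zero_add]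
    _ ≤ ∑' j : ℕ, ∫⁻ z in (ball (0:Space) (s j) \ ball (0:Space) (s (j+1))),
          (ENNReal.ofReal ‖z‖⁻¹) ^ q := lintegral_iUnion_le _ _
    _ ≤ ∑' j : ℕ, (ENNReal.ofReal (2 ^ q * R ^ (3 - q)) * mB) * ENNReal.ofReal θ ^ j :=
        ENNReal.tsum_le_tsum hAj
    _ = (ENNReal.ofReal (2 ^ q * R ^ (3 - q)) * mB) * (1 - ENNReal.ofReal θ)⁻¹ := by
        rw [ENNReal.tsum_mul_left, ENNReal.tsum_geometric]
    _ ≤ ENNReal.ofReal ((2 ^ q * mB.toReal * (1 - θ)⁻¹ + 1) * R ^ (3 - q)) := by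
        have h1 : (1 : ℝ≥0∞) - ENNReal.ofReal θ = ENNReal.ofReal (1 - θ) := by
          rw [ENNReal.ofReal_sub _ hθ0.le, ENNReal.ofReal_one]
        rw [h1, ← ENNReal.ofReal_inv_of_pos h1θ, ← ENNReal.ofReal_toReal hmBtop,
          ← ENNReal.ofReal_mul (by positivity), ← ENNReal.ofReal_mul (by positivity)]
        apply ENNReal.ofReal_le_ofReal
        rw [ENNReal.toReal_ofReal ENNReal.toReal_nonneg]
        have hRq : 0 ≤ R ^ ((3:ℝ) - q) := Real.rpow_nonneg hR.le _
        nlinarith [Real.rpow_pos_of_pos two_pos q, ENNReal.toReal_nonneg (a := mB),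
          inv_nonneg.2 h1θ.le]

lemma Kmeas (R : ℝ) : Measurable ((ball (0:Space) R).indicator (fun z => ENNReal.ofReal ‖z‖⁻¹)) :=
  (ENNReal.measurable_ofReal.comp measurable_norm.inv).indicator measurableSet_ball

lemma Kpow (R q : ℝ) (hq : 0 < q) :
    ∫⁻ z, ((ball (0:Space) R).indicator (fun z => ENNReal.ofReal ‖z‖⁻¹) z) ^ q
      = ∫⁻ z in ball (0:Space) R, (ENNReal.ofReal ‖z‖⁻¹) ^ q := by
  rw [← lintegral_indicator measurableSet_ball]
  congr 1
  funext z
  by_cases hz : z ∈ ball (0:Space) R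
  · simp [hz]
  · simp [hz, ENNReal.zero_rpow_of_pos hq]

lemma nearA (n : ℝ) (hn0 : 0 < n) (f : Space → ℝ≥0∞) (hf : Measurable f)
    (R : ℝ) (W : ℝ≥0∞)
    (hker : ∫⁻ z in ball (0:Space) R, (ENNReal.ofReal ‖z‖⁻¹) ^ (n+1) ≤ W) :
    ∫⁻ x, ∫⁻ y, f x * f y * (ball (0:Space) R).indicator (fun z => ENNReal.ofReal ‖z‖⁻¹) (x - y)
      ≤ (∫⁻ x, f x) * ((∫⁻ x, f x ^ (1+1/n)) ^ (n/(n+1)) * W ^ (1/(n+1))) := by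
  set K := (ball (0:Space) R).indicator (fun z => ENNReal.ofReal ‖z‖⁻¹) with hKdef
  have hKmeas : Measurable K := Kmeas R
  have hn1 : (0:ℝ) < n + 1 := by linarith
  have hconj : (1+1/n).HolderConjugate (n+1) := by
    rw [Real.holderConjugate_iff]
    constructor
    · have : 0 < 1/n := by positivity
      linarith
    · field_simp
  have hKint : ∫⁻ z, K z ^ (n+1) ≤ W := by rw [hKdef, Kpow _ _ hn1]; exact hker
  have hin : ∀ x : Space, ∫⁻ y, f y * K (x - y)
      ≤ (∫⁻ y, f y ^ (1+1/n)) ^ (n/(n+1)) * W ^ (1/(n+1)) := by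
    intro x
    have hKx : Measurable fun y : Space => K (x - y) := hKmeas.comp (measurable_id.const_sub x)
    calc ∫⁻ y, f y * K (x - y)
        ≤ (∫⁻ y, f y ^ (1+1/n)) ^ (1/(1+1/n)) * (∫⁻ y, K (x - y) ^ (n+1)) ^ (1/(n+1)) := by
          simpa using ENNReal.lintegral_mul_le_Lp_mul_Lq volume hconj hf.aemeasurable
            hKx.aemeasurable
      _ ≤ (∫⁻ y, f y ^ (1+1/n)) ^ (n/(n+1)) * W ^ (1/(n+1)) := by
          rw [show 1/(1+1/n) = n/(n+1) by field_simp,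
            (Measure.measurePreserving_sub_left volume x).lintegral_comp
              (hKmeas.pow_const _)]
          gcongr
  calc ∫⁻ x, ∫⁻ y, f x * f y * K (x - y)
      = ∫⁻ x, f x * ∫⁻ y, f y * K (x - y) := by
        apply lintegral_congr
        intro x
        have hfy : Measurable fun y : Space => f y * K (x - y) :=
          hf.mul (hKmeas.comp (measurable_id.const_sub x))
        simp_rw [mul_assoc]
        rw [lintegral_const_mul (f x) hfy]
    _ ≤ ∫⁻ x, f x * ((∫⁻ y, f y ^ (1+1/n)) ^ (n/(n+1)) * W ^ (1/(n+1))) :=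
        lintegral_mono fun x => mul_le_mul_right (hin x) _
    _ = (∫⁻ x, f x) * ((∫⁻ x, f x ^ (1+1/n)) ^ (n/(n+1)) * W ^ (1/(n+1))) :=
        lintegral_mul_const _ hf

lemma nearB (n : ℝ) (hn1 : 1 < n) (f : Space → ℝ≥0∞) (hf : Measurable f)
    (R : ℝ) (W : ℝ≥0∞)
    (hker : ∫⁻ z in ball (0:Space) R, (ENNReal.ofReal ‖z‖⁻¹) ^ ((n+1)/2) ≤ W) :
    ∫⁻ x, ∫⁻ y, f x * f y * (ball (0:Space) R).indicator (fun z => ENNReal.ofReal ‖z‖⁻¹) (x - y)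
      ≤ ((∫⁻ x, f x ^ (1+1/n)) * W) ^ (2/(n+1)) *
        ((∫⁻ x, f x ^ (1+1/n)) * (∫⁻ x, f x ^ (1+1/n))) ^ ((n-1)/(n+1)) := by
  have hn0 : (0:ℝ) < n := by linarith
  have hne0 : n ≠ 0 := hn0.ne'
  have hne1 : n - 1 ≠ 0 := sub_ne_zero.2 hn1.ne'
  have hne2 : n + 1 ≠ 0 := by positivity
  set K := (ball (0:Space) R).indicator (fun z => ENNReal.ofReal ‖z‖⁻¹) with hKdef
  have hKmeas : Measurable K := Kmeas R
  set T := ∫⁻ x, f x ^ (1+1/n) with hT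
  set V := ∫⁻ z, K z ^ ((n+1)/2) with hV
  have hVW : V ≤ W := by rw [hV, hKdef, Kpow _ _ (by linarith)]; exact hker
  have hf1 : Measurable fun p : Space × Space => f p.1 := hf.comp measurable_fst
  have hf2 : Measurable fun p : Space × Space => f p.2 := hf.comp measurable_snd
  have hK12 : Measurable fun p : Space × Space => K (p.1 - p.2) :=
    hKmeas.comp (measurable_fst.sub measurable_snd)
  have hIA : ∫⁻ p : Space × Space, f p.1 ^ (1+1/n) * K (p.1 - p.2) ^ ((n+1)/2)
      ∂((volume : Measure Space).prod volume) = T * V := by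
    rw [lintegral_prod (fun p : Space × Space => f p.1 ^ (1+1/n) * K (p.1 - p.2) ^ ((n+1)/2))
      ((hf1.pow_const _).mul (hK12.pow_const _)).aemeasurable]
    have h1 : ∀ x : Space, ∫⁻ y, f x ^ (1+1/n) * K (x - y) ^ ((n+1)/2)
        = f x ^ (1+1/n) * V := by
      intro x
      have hmy : Measurable fun y : Space => K (x - y) ^ ((n+1)/2) :=
        (hKmeas.comp (measurable_id.const_sub x)).pow_const _
      rw [lintegral_const_mul _ hmy]
      congr 1
      exact (Measure.measurePreserving_sub_left volume x).lintegral_comp (hKmeas.pow_const _)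
    simp_rw [h1]
    rw [lintegral_mul_const _ (hf.pow_const _)]
  have hIB : ∫⁻ p : Space × Space, f p.2 ^ (1+1/n) * K (p.1 - p.2) ^ ((n+1)/2)
      ∂((volume : Measure Space).prod volume) = T * V := by
    rw [lintegral_prod_symm (fun p : Space × Space => f p.2 ^ (1+1/n) * K (p.1 - p.2) ^ ((n+1)/2))
      ((hf2.pow_const _).mul (hK12.pow_const _)).aemeasurable]
    have h1 : ∀ y : Space, ∫⁻ x, f y ^ (1+1/n) * K (x - y) ^ ((n+1)/2)
        = f y ^ (1+1/n) * V := by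
      intro y
      have hmy : Measurable fun x : Space => K (x - y) ^ ((n+1)/2) :=
        (hKmeas.comp (measurable_id.sub_const y)).pow_const _
      rw [lintegral_const_mul _ hmy]
      congr 1
      exact (measurePreserving_sub_right volume y).lintegral_comp (hKmeas.pow_const _)
    simp_rw [h1]
    rw [lintegral_mul_const _ (hf.pow_const _)]
  have hIC : ∫⁻ p : Space × Space, f p.1 ^ (1+1/n) * f p.2 ^ (1+1/n)
      ∂((volume : Measure Space).prod volume) = T * T := by
    rw [lintegral_prod (fun p : Space × Space => f p.1 ^ (1+1/n) * f p.2 ^ (1+1/n))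
      ((hf1.pow_const _).mul (hf2.pow_const _)).aemeasurable]
    have h1 : ∀ x : Space, ∫⁻ y, f x ^ (1+1/n) * f y ^ (1+1/n) = f x ^ (1+1/n) * T := by
      intro x
      rw [lintegral_const_mul _ (hf.pow_const _)]
    simp_rw [h1]
    rw [lintegral_mul_const _ (hf.pow_const _)]
  have hstep0 : ∫⁻ x, ∫⁻ y, f x * f y * K (x - y)
      = ∫⁻ p : Space × Space, f p.1 * f p.2 * K (p.1 - p.2)
        ∂((volume : Measure Space).prod volume) :=
    lintegral_lintegral ((hf1.mul hf2).mul hK12).aemeasurable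
  have hc1 : (n+1).HolderConjugate ((n+1)/n) := Real.holderConjugate_iff.mpr ⟨by linarith, by field_simp; try ring⟩
  have hc2 : n.HolderConjugate (n/(n-1)) := Real.holderConjugate_iff.mpr ⟨hn1, by field_simp; try ring⟩
  set A := fun p : Space × Space => f p.1 ^ ((1:ℝ)/n) * K (p.1 - p.2) ^ ((1:ℝ)/2) with hA
  set B := fun p : Space × Space => f p.2 ^ ((1:ℝ)/n) * K (p.1 - p.2) ^ ((1:ℝ)/2) with hB
  set C := fun p : Space × Space => f p.1 ^ ((n-1)/n) * f p.2 ^ ((n-1)/n) with hC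
  have hAmeas : Measurable A := (hf1.pow_const _).mul (hK12.pow_const _)
  have hBmeas : Measurable B := (hf2.pow_const _).mul (hK12.pow_const _)
  have hCmeas : Measurable C := (hf1.pow_const _).mul (hf2.pow_const _)
  have hfac : ∀ p : Space × Space, f p.1 * f p.2 * K (p.1 - p.2) = A p * (B p * C p) := by
    intro p
    have e1 : f p.1 ^ ((1:ℝ)/n) * f p.1 ^ ((n-1)/n) = f p.1 := by
      rw [← ENNReal.rpow_add_of_nonneg _ _ (by positivity) (div_nonneg (by linarith) hn0.le),
        show (1:ℝ)/n + (n-1)/n = 1 by field_simp; try ring, ENNReal.rpow_one]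
    have e2 : f p.2 ^ ((1:ℝ)/n) * f p.2 ^ ((n-1)/n) = f p.2 := by
      rw [← ENNReal.rpow_add_of_nonneg _ _ (by positivity) (div_nonneg (by linarith) hn0.le),
        show (1:ℝ)/n + (n-1)/n = 1 by field_simp; try ring, ENNReal.rpow_one]
    have e3 : K (p.1 - p.2) ^ ((1:ℝ)/2) * K (p.1 - p.2) ^ ((1:ℝ)/2) = K (p.1 - p.2) := by
      rw [← ENNReal.rpow_add_of_nonneg _ _ (by norm_num) (by norm_num),
        show (1:ℝ)/2 + 1/2 = 1 by norm_num, ENNReal.rpow_one]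
    calc f p.1 * f p.2 * K (p.1 - p.2)
        = (f p.1 ^ ((1:ℝ)/n) * f p.1 ^ ((n-1)/n)) * (f p.2 ^ ((1:ℝ)/n) * f p.2 ^ ((n-1)/n))
          * (K (p.1 - p.2) ^ ((1:ℝ)/2) * K (p.1 - p.2) ^ ((1:ℝ)/2)) := by rw [e1, e2, e3]
      _ = A p * (B p * C p) := by simp only [hA, hB, hC]; ring
  have hApow : ∀ p : Space × Space, A p ^ (n+1)
      = f p.1 ^ (1+1/n) * K (p.1 - p.2) ^ ((n+1)/2) := by
    intro p
    simp only [hA]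
    rw [ENNReal.mul_rpow_of_nonneg _ _ (by linarith : (0:ℝ) ≤ n+1), ← ENNReal.rpow_mul,
      ← ENNReal.rpow_mul,
      show (1:ℝ)/n*(n+1) = 1+1/n by field_simp; try ring,
      show (1:ℝ)/2*(n+1) = (n+1)/2 by ring]
  have hBpow : ∀ p : Space × Space, (B p ^ ((n+1)/n)) ^ n
      = f p.2 ^ (1+1/n) * K (p.1 - p.2) ^ ((n+1)/2) := by
    intro p
    rw [← ENNReal.rpow_mul, show (n+1)/n*n = n+1 by field_simp; try ring]
    simp only [hB]
    rw [ENNReal.mul_rpow_of_nonneg _ _ (by linarith : (0:ℝ) ≤ n+1), ← ENNReal.rpow_mul,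
      ← ENNReal.rpow_mul,
      show (1:ℝ)/n*(n+1) = 1+1/n by field_simp; try ring,
      show (1:ℝ)/2*(n+1) = (n+1)/2 by ring]
  have hCpow : ∀ p : Space × Space, (C p ^ ((n+1)/n)) ^ (n/(n-1))
      = f p.1 ^ (1+1/n) * f p.2 ^ (1+1/n) := by
    intro p
    rw [← ENNReal.rpow_mul, show (n+1)/n*(n/(n-1)) = (n+1)/(n-1) by field_simp; try ring]
    simp only [hC]
    rw [ENNReal.mul_rpow_of_nonneg _ _ (div_nonneg (by linarith) (by linarith)),
      ← ENNReal.rpow_mul, ← ENNReal.rpow_mul,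
      show (n-1)/n*((n+1)/(n-1)) = 1+1/n by field_simp; try ring]
  have halg : ((T * V) ^ ((1:ℝ)/n) * (T * T) ^ ((n-1)/n)) ^ (n/(n+1))
      = (T * V) ^ ((1:ℝ)/(n+1)) * (T * T) ^ ((n-1)/(n+1)) := by
    rw [ENNReal.mul_rpow_of_nonneg _ _ (div_nonneg hn0.le (by linarith)), ← ENNReal.rpow_mul,
      ← ENNReal.rpow_mul,
      show (1:ℝ)/n*(n/(n+1)) = 1/(n+1) by field_simp; try ring,
      show (n-1)/n*(n/(n+1)) = (n-1)/(n+1) by field_simp; try ring]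
  rw [hstep0]
  calc ∫⁻ p : Space × Space, f p.1 * f p.2 * K (p.1 - p.2)
        ∂((volume : Measure Space).prod volume)
      = ∫⁻ p, A p * (B p * C p) ∂((volume : Measure Space).prod volume) :=
        lintegral_congr hfac
    _ ≤ (∫⁻ p, A p ^ (n+1) ∂((volume : Measure Space).prod volume)) ^ (1/(n+1)) *
        (∫⁻ p, (B p * C p) ^ ((n+1)/n)
          ∂((volume : Measure Space).prod volume)) ^ (1/((n+1)/n)) := by
        simpa using ENNReal.lintegral_mul_le_Lp_mul_Lq _ hc1 hAmeas.aemeasurable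
          (hBmeas.mul hCmeas).aemeasurable
    _ ≤ (T * V) ^ ((1:ℝ)/(n+1)) * ((T * V) ^ ((1:ℝ)/n) * (T * T) ^ ((n-1)/n)) ^ (n/(n+1)) := by
        have h2 : ∫⁻ p, (B p * C p) ^ ((n+1)/n) ∂((volume : Measure Space).prod volume)
            ≤ (T * V) ^ ((1:ℝ)/n) * (T * T) ^ ((n-1)/n) := by
          have hexp : ∀ p : Space × Space, (B p * C p) ^ ((n+1)/n)
              = B p ^ ((n+1)/n) * C p ^ ((n+1)/n) := fun p =>
            ENNReal.mul_rpow_of_nonneg _ _ (by positivity)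
          calc ∫⁻ p, (B p * C p) ^ ((n+1)/n) ∂((volume : Measure Space).prod volume)
              = ∫⁻ p, B p ^ ((n+1)/n) * C p ^ ((n+1)/n)
                  ∂((volume : Measure Space).prod volume) := lintegral_congr hexp
            _ ≤ (∫⁻ p, (B p ^ ((n+1)/n)) ^ n ∂((volume : Measure Space).prod volume)) ^ (1/n) *
                (∫⁻ p, (C p ^ ((n+1)/n)) ^ (n/(n-1))
                  ∂((volume : Measure Space).prod volume)) ^ (1/(n/(n-1))) := by
                simpa using ENNReal.lintegral_mul_le_Lp_mul_Lq _ hc2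
                  (hBmeas.pow_const _).aemeasurable (hCmeas.pow_const _).aemeasurable
            _ = (T * V) ^ ((1:ℝ)/n) * (T * T) ^ ((n-1)/n) := by
                rw [lintegral_congr hBpow, lintegral_congr hCpow, hIB, hIC,
                  show 1/(n/(n-1)) = (n-1)/n by field_simp; try ring]
        rw [lintegral_congr hApow, hIA, show 1/((n+1)/n) = n/(n+1) by field_simp; try ring,
          show (1:ℝ)/(n+1) = 1/(n+1) by norm_num]
        exact mul_le_mul_right (ENNReal.rpow_le_rpow h2 (by positivity)) _
    _ = (T * V) ^ (2/(n+1)) * (T * T) ^ ((n-1)/(n+1)) := by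
        rw [halg, ← mul_assoc,
          ← ENNReal.rpow_add_of_nonneg _ _ (by positivity) (by positivity),
          show (1:ℝ)/(n+1) + 1/(n+1) = 2/(n+1) by ring]
    _ ≤ (T * W) ^ (2/(n+1)) * (T * T) ^ ((n-1)/(n+1)) := by
        gcongr

lemma I_reduction (n : ℝ) (hpe : (0:ℝ) ≤ 1 + 1/n) (M : ℝ) (ρ : Space → ℝ)
    (h0 : ∀ x, 0 ≤ ρ x) (hInt : Integrable ρ) (hMeq : (∫ x : Space, ρ x) = M) :
    ∃ f : Space → ℝ≥0∞, Measurable f ∧ (∫⁻ x, f x) = ENNReal.ofReal M ∧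
      (∫⁻ x, f x ^ (1+1/n)) = (∫⁻ x, ENNReal.ofReal (ρ x ^ (1+1/n))) ∧
      ∀ R : ℝ, 0 < R →
        ENNReal.ofReal (∫ x : Space, ∫ y : Space, ρ x * ρ y / ‖x - y‖)
          ≤ (∫⁻ x, ∫⁻ y, f x * f y *
              (ball (0:Space) R).indicator (fun z => ENNReal.ofReal ‖z‖⁻¹) (x - y))
            + ENNReal.ofReal R⁻¹ * (ENNReal.ofReal M * ENNReal.ofReal M) := by
  have hρae : AEMeasurable ρ (volume : Measure Space) := hInt.aemeasurable
  set g := hρae.mk ρ with hg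
  have hgmeas : Measurable g := hρae.measurable_mk
  have hgae : ρ =ᵐ[volume] g := hρae.ae_eq_mk
  refine ⟨fun x => ENNReal.ofReal (g x), ENNReal.measurable_ofReal.comp hgmeas, ?_, ?_, ?_⟩
  · rw [← lintegral_congr_ae (hgae.mono fun x hx => by simp only [hx] :
      (fun x => ENNReal.ofReal (ρ x)) =ᵐ[volume] fun x => ENNReal.ofReal (g x)),
      ← ofReal_integral_eq_lintegral_ofReal hInt (ae_of_all _ h0), hMeq]
  · apply lintegral_congr_ae
    filter_upwards [hgae] with x hx
    rw [← hx, ENNReal.ofReal_rpow_of_nonneg (h0 x) hpe]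
  intro R hR
  set f : Space → ℝ≥0∞ := fun x => ENNReal.ofReal (g x) with hf
  have hfmeas : Measurable f := ENNReal.measurable_ofReal.comp hgmeas
  have hfae : (fun x => ENNReal.ofReal (ρ x)) =ᵐ[volume] f := hgae.mono fun x hx => by
    rw [hf]; simp only []; rw [hx]
  set K := (ball (0:Space) R).indicator (fun z => ENNReal.ofReal ‖z‖⁻¹) with hK
  have hKmeas : Measurable K :=
    (ENNReal.measurable_ofReal.comp measurable_norm.inv).indicator measurableSet_ball
  have hMof : (∫⁻ x, f x) = ENNReal.ofReal M := by
    rw [← lintegral_congr_ae hfae,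
      ← ofReal_integral_eq_lintegral_ofReal hInt (ae_of_all _ h0), hMeq]
  have hsplit : ∀ z : Space, ENNReal.ofReal ‖z‖⁻¹ ≤ K z + ENNReal.ofReal R⁻¹ := by
    intro z
    by_cases hz : z ∈ ball (0:Space) R
    · rw [hK]; rw [Set.indicator_of_mem hz]; exact le_self_add
    · have h1 : R ≤ ‖z‖ := by simpa [mem_ball_zero_iff, not_lt] using hz
      rw [hK, Set.indicator_of_notMem hz, zero_add]
      exact ENNReal.ofReal_le_ofReal (inv_anti₀ hR h1)
  calc ENNReal.ofReal (∫ x : Space, ∫ y : Space, ρ x * ρ y / ‖x - y‖)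
      ≤ ∫⁻ x, ENNReal.ofReal (∫ y : Space, ρ x * ρ y / ‖x - y‖) :=
        ofReal_integral_le' _ (fun x => integral_nonneg fun y => div_nonneg (mul_nonneg (h0 x) (h0 y)) (norm_nonneg _))
    _ ≤ ∫⁻ x, ∫⁻ y, ENNReal.ofReal (ρ x * ρ y / ‖x - y‖) :=
        lintegral_mono fun x => ofReal_integral_le' _ (fun y => div_nonneg (mul_nonneg (h0 x) (h0 y)) (norm_nonneg _))
    _ = ∫⁻ x, ∫⁻ y, ENNReal.ofReal (ρ x) * (ENNReal.ofReal (ρ y) * ENNReal.ofReal ‖x - y‖⁻¹) := by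
        apply lintegral_congr; intro x; apply lintegral_congr; intro y
        rw [div_eq_mul_inv, mul_assoc, ENNReal.ofReal_mul (h0 x), ENNReal.ofReal_mul (h0 y)]
    _ = ∫⁻ x, ∫⁻ y, f x * (f y * ENNReal.ofReal ‖x - y‖⁻¹) := by
        apply lintegral_congr_ae
        filter_upwards [hfae] with x hx
        apply lintegral_congr_ae
        filter_upwards [hfae] with y hy
        rw [hx, hy]
    _ ≤ ∫⁻ x, ∫⁻ y, f x * (f y * (K (x - y) + ENNReal.ofReal R⁻¹)) :=
        lintegral_mono fun x => lintegral_mono fun y =>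
          mul_le_mul_right (mul_le_mul_right (hsplit _) _) _
    _ = ∫⁻ x, ((∫⁻ y, f x * f y * K (x - y)) + ∫⁻ y, f x * f y * ENNReal.ofReal R⁻¹) := by
        apply lintegral_congr; intro x
        rw [← lintegral_add_left (f := fun y => f x * f y * K (x - y)) ((measurable_const.mul hfmeas).mul
          (hKmeas.comp (measurable_id.const_sub x)) :
            Measurable fun y => f x * f y * K (x - y))]
        apply lintegral_congr; intro y
        ring
    _ = (∫⁻ x, ∫⁻ y, f x * f y * K (x - y)) + ∫⁻ x, ∫⁻ y, f x * f y * ENNReal.ofReal R⁻¹ := by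
        have hm1 : Measurable fun x => ∫⁻ y, f x * f y * K (x - y) := by
          apply Measurable.lintegral_prod_right (f := fun x y => f x * f y * K (x - y))
          exact ((hfmeas.comp measurable_fst).mul (hfmeas.comp measurable_snd)).mul
            (hKmeas.comp (measurable_fst.sub measurable_snd))
        rw [lintegral_add_left hm1]
    _ ≤ (∫⁻ x, ∫⁻ y, f x * f y * K (x - y))
        + ENNReal.ofReal R⁻¹ * (ENNReal.ofReal M * ENNReal.ofReal M) := by
        gcongr
        have hin : ∀ x : Space, ∫⁻ y, f x * f y * ENNReal.ofReal R⁻¹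
            = f x * (ENNReal.ofReal M * ENNReal.ofReal R⁻¹) := by
          intro x
          have : ∀ y : Space, f x * f y * ENNReal.ofReal R⁻¹
              = f x * (f y * ENNReal.ofReal R⁻¹) := fun y => by ring
          simp_rw [this]
          rw [lintegral_const_mul _ (hfmeas.mul_const _), lintegral_mul_const _ hfmeas, hMof]
        simp_rw [hin]
        rw [lintegral_mul_const _ hfmeas, hMof]
        apply le_of_eq
        ring

lemma finalA (n M KT cA S : ℝ) (hn0 : 0 < n) (hn3 : n < 3) (hM : 0 < M) (hKT : 0 < KT)
    (hcA : 0 < cA) (hS : 0 ≤ S) :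
    M * ((KT*(1+S))^(n/(n+1)) * (cA * ((1+S)^(-(n/3)))^(2-n))^(1/(n+1)))
      + ((1+S)^(-(n/3)))⁻¹ * (M*M)
    ≤ (M * (KT^(n/(n+1)) * cA^(1/(n+1))) + M*M) * (1 + S^(n/3)) := by
  have hσ0 : (0:ℝ) < 1 + S := by linarith
  have hne2 : n + 1 ≠ 0 := by positivity
  have eR : ((1+S)^(-(n/3)))⁻¹ = (1+S)^(n/3) := by
    rw [Real.rpow_neg hσ0.le, inv_inv]
  have key : (KT*(1+S))^(n/(n+1)) * (cA * ((1+S)^(-(n/3)))^(2-n))^(1/(n+1))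
      = (KT^(n/(n+1)) * cA^(1/(n+1))) * (1+S)^(n/3) := by
    rw [Real.mul_rpow hKT.le hσ0.le,
      show ((1+S)^(-(n/3)))^(2-n) = (1+S)^((-(n/3))*(2-n)) from (Real.rpow_mul hσ0.le _ _).symm,
      Real.mul_rpow hcA.le (Real.rpow_nonneg hσ0.le _),
      show ((1+S)^((-(n/3))*(2-n)))^(1/(n+1)) = (1+S)^(((-(n/3))*(2-n))*(1/(n+1))) from
        (Real.rpow_mul hσ0.le _ _).symm,
      show (KT ^ (n/(n+1)) * (1+S)^(n/(n+1))) * (cA^(1/(n+1)) * (1+S)^(((-(n/3))*(2-n))*(1/(n+1))))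
        = (KT^(n/(n+1)) * cA^(1/(n+1))) * ((1+S)^(n/(n+1)) * (1+S)^(((-(n/3))*(2-n))*(1/(n+1))))
        from by ring,
      ← Real.rpow_add hσ0,
      show n/(n+1) + ((-(n/3))*(2-n))*(1/(n+1)) = n/3 from by field_simp; ring]
  rw [key, eR]
  have hmono : (1+S)^(n/3) ≤ 1 + S^(n/3) := by
    calc (1+S)^(n/3) ≤ 1^(n/3) + S^(n/3) :=
          real_rpow_add_le 1 S _ zero_le_one hS (by positivity) (by linarith)
      _ = 1 + S^(n/3) := by rw [Real.one_rpow]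
  have h1 : 0 ≤ M * (KT^(n/(n+1)) * cA^(1/(n+1))) := by positivity
  nlinarith [Real.rpow_nonneg hσ0.le (n/3), Real.rpow_nonneg hS (n/3)]


lemma finalB (n M KT cB S : ℝ) (hn0 : 0 < n) (hn3 : n < 3) (hM : 0 < M) (hKT : 0 < KT)
    (hcB : 0 < cB) (hS : 0 ≤ S) :
    ((KT*(1+S)) * (cB * ((1+S)^(-(n/3)))^(3-(n+1)/2)))^(2/(n+1))
        * ((KT*(1+S)) * (KT*(1+S)))^((n-1)/(n+1))
      + ((1+S)^(-(n/3)))⁻¹ * (M*M)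
    ≤ ((KT*cB)^(2/(n+1)) * (KT*KT)^((n-1)/(n+1)) + M*M) * (1 + S^(n/3)) := by
  have hσ0 : (0:ℝ) < 1 + S := by linarith
  have hne2 : n + 1 ≠ 0 := by positivity
  have eR : ((1+S)^(-(n/3)))⁻¹ = (1+S)^(n/3) := by
    rw [Real.rpow_neg hσ0.le, inv_inv]
  set u : ℝ := (-(n/3))*(3-(n+1)/2) with hu
  have e2 : (1+S) * (1+S)^u = (1+S)^(1+u) := by
    rw [Real.rpow_add hσ0, Real.rpow_one]
  have e3 : (1+S) * (1+S) = (1+S)^(2:ℝ) := by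
    rw [show (2:ℝ) = 1+1 by norm_num, Real.rpow_add hσ0, Real.rpow_one]
  have key : ((KT*(1+S)) * (cB * ((1+S)^(-(n/3)))^(3-(n+1)/2)))^(2/(n+1))
        * ((KT*(1+S)) * (KT*(1+S)))^((n-1)/(n+1))
      = ((KT*cB)^(2/(n+1)) * (KT*KT)^((n-1)/(n+1))) * (1+S)^(n/3) := by
    rw [show ((1+S)^(-(n/3)))^(3-(n+1)/2) = (1+S)^u from (Real.rpow_mul hσ0.le _ _).symm,
      show (KT*(1+S)) * (cB * (1+S)^u) = (KT*cB) * ((1+S) * (1+S)^u) from by ring,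
      e2,
      show (KT*(1+S)) * (KT*(1+S)) = (KT*KT) * ((1+S) * (1+S)) from by ring,
      e3,
      Real.mul_rpow (by positivity) (Real.rpow_nonneg hσ0.le _),
      Real.mul_rpow (by positivity) (Real.rpow_nonneg hσ0.le _),
      show ((1+S)^(1+u))^(2/(n+1)) = (1+S)^((1+u)*(2/(n+1))) from (Real.rpow_mul hσ0.le _ _).symm,
      show ((1+S)^(2:ℝ))^((n-1)/(n+1)) = (1+S)^((2:ℝ)*((n-1)/(n+1))) from
        (Real.rpow_mul hσ0.le _ _).symm,
      show (KT*cB)^(2/(n+1)) * (1+S)^((1+u)*(2/(n+1)))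
          * ((KT*KT)^((n-1)/(n+1)) * (1+S)^((2:ℝ)*((n-1)/(n+1))))
        = ((KT*cB)^(2/(n+1)) * (KT*KT)^((n-1)/(n+1)))
          * ((1+S)^((1+u)*(2/(n+1))) * (1+S)^((2:ℝ)*((n-1)/(n+1)))) from by ring,
      ← Real.rpow_add hσ0,
      show (1+u)*(2/(n+1)) + (2:ℝ)*((n-1)/(n+1)) = n/3 from by rw [hu]; field_simp; ring]
  rw [key, eR]
  have hmono : (1+S)^(n/3) ≤ 1 + S^(n/3) := by
    calc (1+S)^(n/3) ≤ 1^(n/3) + S^(n/3) :=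
          real_rpow_add_le 1 S _ zero_le_one hS (by positivity) (by linarith)
      _ = 1 + S^(n/3) := by rw [Real.one_rpow]
  have h1 : 0 ≤ (KT*cB)^(2/(n+1)) * (KT*KT)^((n-1)/(n+1)) := by positivity
  nlinarith [Real.rpow_nonneg hσ0.le (n/3), Real.rpow_nonneg hS (n/3)]

end Aux

section Main

open Metric
open scoped ENNReal NNReal

lemma main_estimate (Φ Φ' : ℝ → ℝ) (n n' : ℝ) (hΦ : PhiHyp Φ Φ' n n') (M : ℝ) (hM : 0 < M) :
    ∃ C > (0:ℝ), ∀ ρ ∈ FMr Φ M,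
      (∫ x : Space, ∫ y : Space, ρ x * ρ y / ‖x - y‖)
        ≤ C * (1 + (∫ x : Space, Φ (ρ x)) ^ (n/3)) := by
  have hn0 := hΦ.n_pos
  have hn3 := hΦ.n_lt_three
  have hpe : (0:ℝ) ≤ 1 + 1/n := by positivity
  obtain ⟨Cg, hCg, r₁, hgrow⟩ := hΦ.growth
  set r₀ : ℝ := max r₁ 1 with hr₀def
  have hr₀1 : (1:ℝ) ≤ r₀ := le_max_right _ _
  have hr₀0 : (0:ℝ) < r₀ := lt_of_lt_of_le one_pos hr₀1
  have hΦnn := Phi_nonneg hΦ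
  have hpow : ∀ r : ℝ, 0 ≤ r → r ^ (1+1/n) ≤ r₀^(1/n) * r + Cg⁻¹ * Φ r := by
    intro r hr
    rcases le_total r r₀ with h | h
    · have hΦr : 0 ≤ Φ r := hΦnn r hr
      have h2 : r ^ (1+1/n) ≤ r₀^(1/n) * r := by
        rcases eq_or_lt_of_le hr with heq | hr0
        · rw [← heq, Real.zero_rpow (by positivity : (1:ℝ)+1/n ≠ 0)]
          simp
        · rw [Real.rpow_add hr0, Real.rpow_one]
          have : r ^ (1/n) ≤ r₀ ^ (1/n) := Real.rpow_le_rpow hr h (by positivity)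
          nlinarith
      nlinarith [mul_nonneg (inv_nonneg.2 hCg.le) hΦr]
    · have hg := hgrow r (le_trans (le_max_left _ _) h)
      have h2 : r ^ (1+1/n) ≤ Cg⁻¹ * Φ r := by
        have := mul_le_mul_of_nonneg_left hg (inv_nonneg.2 hCg.le)
        rw [← mul_assoc, inv_mul_cancel₀ hCg.ne', one_mul] at this
        exact this
      nlinarith [mul_nonneg (Real.rpow_nonneg hr₀0.le (1/n)) hr]
  set KT : ℝ := r₀^(1/n) * M + Cg⁻¹ with hKTdef
  have hKT : 0 < KT :=
    add_pos (mul_pos (Real.rpow_pos_of_pos hr₀0 _) hM) (inv_pos.2 hCg)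
  have hTB : ∀ ρ : Space → ℝ, (∀ x, 0 ≤ ρ x) → Integrable ρ volume →
      Integrable (fun x => Φ (ρ x)) volume → (∫ x : Space, ρ x) = M →
      (∫⁻ x, ENNReal.ofReal (ρ x ^ (1+1/n)))
        ≤ ENNReal.ofReal (KT * (1 + ∫ x : Space, Φ (ρ x))) := by
    intro ρ h0 hInt hΦInt hMeq
    set S := ∫ x : Space, Φ (ρ x) with hS
    have hS0 : 0 ≤ S := integral_nonneg fun x => hΦnn _ (h0 x)
    calc ∫⁻ x, ENNReal.ofReal (ρ x ^ (1+1/n))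
        ≤ ∫⁻ x, (ENNReal.ofReal (r₀^(1/n) * ρ x) + ENNReal.ofReal (Cg⁻¹ * Φ (ρ x))) := by
          apply lintegral_mono; intro x
          calc ENNReal.ofReal (ρ x ^ (1+1/n))
              ≤ ENNReal.ofReal (r₀^(1/n) * ρ x + Cg⁻¹ * Φ (ρ x)) :=
                ENNReal.ofReal_le_ofReal (hpow _ (h0 x))
            _ ≤ _ := ENNReal.ofReal_add_le
      _ = (∫⁻ x, ENNReal.ofReal (r₀^(1/n) * ρ x)) + ∫⁻ x, ENNReal.ofReal (Cg⁻¹ * Φ (ρ x)) :=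
          lintegral_add_left'
            (ENNReal.measurable_ofReal.comp_aemeasurable (hInt.aemeasurable.const_mul _)) _
      _ = ENNReal.ofReal (r₀^(1/n) * M) + ENNReal.ofReal (Cg⁻¹ * S) := by
          rw [← ofReal_integral_eq_lintegral_ofReal (hInt.const_mul _)
              (ae_of_all _ fun x => mul_nonneg (Real.rpow_nonneg hr₀0.le _) (h0 x)),
            ← ofReal_integral_eq_lintegral_ofReal (hΦInt.const_mul _)
              (ae_of_all _ fun x => mul_nonneg (inv_nonneg.2 hCg.le) (hΦnn _ (h0 x))),
            integral_const_mul, integral_const_mul, hMeq]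
      _ ≤ ENNReal.ofReal (KT * (1 + S)) := by
          rw [← ENNReal.ofReal_add (mul_nonneg (Real.rpow_nonneg hr₀0.le _) hM.le)
            (mul_nonneg (inv_nonneg.2 hCg.le) hS0)]
          apply ENNReal.ofReal_le_ofReal
          have h1 : 0 ≤ r₀^(1/n) := Real.rpow_nonneg hr₀0.le _
          have h2 : 0 ≤ Cg⁻¹ := inv_nonneg.2 hCg.le
          rw [hKTdef]
          nlinarith [mul_nonneg (mul_nonneg h1 hM.le) hS0]
  rcases lt_or_ge n 2 with hn2 | hn2
  · -- Case A : n < 2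
    obtain ⟨cA, hcA, hkerA⟩ := kernel_bound (n+1) (by linarith) (by linarith)
    refine ⟨M * (KT^(n/(n+1)) * cA^(1/(n+1))) + M*M + 1, by positivity, ?_⟩
    rintro ρ ⟨h0, hInt, hΦInt, hMeq⟩
    set S := ∫ x : Space, Φ (ρ x) with hSdef
    have hS0 : 0 ≤ S := integral_nonneg fun x => hΦnn _ (h0 x)
    have hσ0 : (0:ℝ) < 1 + S := by linarith
    have hR0 : 0 < (1+S)^(-(n/3)) := Real.rpow_pos_of_pos hσ0 _
    obtain ⟨f, hfmeas, hfM, hfT, hred⟩ := I_reduction n hpe M ρ h0 hInt hMeq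
    have hker' : ∫⁻ z in ball (0:Space) ((1+S)^(-(n/3))), (ENNReal.ofReal ‖z‖⁻¹) ^ (n+1)
        ≤ ENNReal.ofReal (cA * ((1+S)^(-(n/3)))^(2-n)) := by
      have := hkerA _ hR0
      rwa [show (3:ℝ) - (n+1) = 2-n by ring] at this
    have hnear := nearA n hn0 f hfmeas ((1+S)^(-(n/3))) _ hker'
    have hT : (∫⁻ x, f x ^ (1+1/n)) ≤ ENNReal.ofReal (KT * (1+S)) := by
      rw [hfT]; exact hTB ρ h0 hInt hΦInt hMeq
    have hchain : ENNReal.ofReal (∫ x : Space, ∫ y : Space, ρ x * ρ y / ‖x - y‖)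
        ≤ ENNReal.ofReal ((M * (KT^(n/(n+1)) * cA^(1/(n+1))) + M*M) * (1 + S^(n/3))) := by
      calc ENNReal.ofReal (∫ x : Space, ∫ y : Space, ρ x * ρ y / ‖x - y‖)
          ≤ (∫⁻ x, ∫⁻ y, f x * f y *
              (ball (0:Space) ((1+S)^(-(n/3)))).indicator
                (fun z => ENNReal.ofReal ‖z‖⁻¹) (x - y))
            + ENNReal.ofReal ((1+S)^(-(n/3)))⁻¹ * (ENNReal.ofReal M * ENNReal.ofReal M) :=
            hred _ hR0
        _ ≤ (∫⁻ x, f x) * ((∫⁻ x, f x ^ (1+1/n)) ^ (n/(n+1))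
              * (ENNReal.ofReal (cA * ((1+S)^(-(n/3)))^(2-n))) ^ (1/(n+1)))
            + ENNReal.ofReal ((1+S)^(-(n/3)))⁻¹ * (ENNReal.ofReal M * ENNReal.ofReal M) :=
            add_le_add_left hnear _
        _ ≤ ENNReal.ofReal M * ((ENNReal.ofReal (KT * (1+S))) ^ (n/(n+1))
              * (ENNReal.ofReal (cA * ((1+S)^(-(n/3)))^(2-n))) ^ (1/(n+1)))
            + ENNReal.ofReal ((1+S)^(-(n/3)))⁻¹ * (ENNReal.ofReal M * ENNReal.ofReal M) := by
            rw [hfM]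
            exact add_le_add_left (mul_le_mul_right
              (mul_le_mul_left (ENNReal.rpow_le_rpow hT
                (div_nonneg hn0.le (by linarith))) _) _) _
        _ = ENNReal.ofReal (M * ((KT*(1+S))^(n/(n+1)) * (cA * ((1+S)^(-(n/3)))^(2-n))^(1/(n+1)))
              + ((1+S)^(-(n/3)))⁻¹ * (M*M)) := by
            have he1 : (0:ℝ) ≤ n/(n+1) := div_nonneg hn0.le (by linarith)
            have he2 : (0:ℝ) ≤ 1/(n+1) := div_nonneg (by norm_num) (by linarith)
            have hKTσ : (0:ℝ) ≤ KT*(1+S) := mul_nonneg hKT.le hσ0.le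
            have hcAR : (0:ℝ) ≤ cA * ((1+S)^(-(n/3)))^(2-n) :=
              mul_nonneg hcA.le (Real.rpow_nonneg hR0.le _)
            rw [ENNReal.ofReal_add (mul_nonneg hM.le (mul_nonneg (Real.rpow_nonneg hKTσ _)
                (Real.rpow_nonneg hcAR _)))
                (mul_nonneg (inv_nonneg.2 hR0.le) (mul_nonneg hM.le hM.le)),
              ENNReal.ofReal_mul hM.le,
              ENNReal.ofReal_mul (Real.rpow_nonneg hKTσ _),
              ENNReal.ofReal_mul (inv_nonneg.2 hR0.le),
              ENNReal.ofReal_mul hM.le,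
              ENNReal.ofReal_rpow_of_nonneg hKTσ he1,
              ENNReal.ofReal_rpow_of_nonneg hcAR he2]
        _ ≤ ENNReal.ofReal ((M * (KT^(n/(n+1)) * cA^(1/(n+1))) + M*M) * (1 + S^(n/3))) :=
            ENNReal.ofReal_le_ofReal (finalA n M KT cA S hn0 hn3 hM hKT hcA hS0)
    have hrhs0 : (0:ℝ) ≤ (M * (KT^(n/(n+1)) * cA^(1/(n+1))) + M*M) * (1 + S^(n/3)) := by
      have := Real.rpow_nonneg hS0 (n/3)
      positivity
    have hIle := (ENNReal.ofReal_le_ofReal_iff hrhs0).1 hchain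
    have hSn : 0 ≤ S^(n/3) := Real.rpow_nonneg hS0 _
    nlinarith [hIle]
  · -- Case B : 2 ≤ n
    have hn1 : (1:ℝ) < n := by linarith
    obtain ⟨cB, hcB, hkerB⟩ := kernel_bound ((n+1)/2) (by linarith) (by linarith)
    refine ⟨(KT*cB)^(2/(n+1)) * (KT*KT)^((n-1)/(n+1)) + M*M + 1, by positivity, ?_⟩
    rintro ρ ⟨h0, hInt, hΦInt, hMeq⟩
    set S := ∫ x : Space, Φ (ρ x) with hSdef
    have hS0 : 0 ≤ S := integral_nonneg fun x => hΦnn _ (h0 x)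
    have hσ0 : (0:ℝ) < 1 + S := by linarith
    have hR0 : 0 < (1+S)^(-(n/3)) := Real.rpow_pos_of_pos hσ0 _
    obtain ⟨f, hfmeas, hfM, hfT, hred⟩ := I_reduction n hpe M ρ h0 hInt hMeq
    have hker' : ∫⁻ z in ball (0:Space) ((1+S)^(-(n/3))), (ENNReal.ofReal ‖z‖⁻¹) ^ ((n+1)/2)
        ≤ ENNReal.ofReal (cB * ((1+S)^(-(n/3)))^(3-(n+1)/2)) := hkerB _ hR0
    have hnear := nearB n hn1 f hfmeas ((1+S)^(-(n/3))) _ hker'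
    have hT : (∫⁻ x, f x ^ (1+1/n)) ≤ ENNReal.ofReal (KT * (1+S)) := by
      rw [hfT]; exact hTB ρ h0 hInt hΦInt hMeq
    have hchain : ENNReal.ofReal (∫ x : Space, ∫ y : Space, ρ x * ρ y / ‖x - y‖)
        ≤ ENNReal.ofReal (((KT*cB)^(2/(n+1)) * (KT*KT)^((n-1)/(n+1)) + M*M) * (1 + S^(n/3))) := by
      calc ENNReal.ofReal (∫ x : Space, ∫ y : Space, ρ x * ρ y / ‖x - y‖)
          ≤ (∫⁻ x, ∫⁻ y, f x * f y *
              (ball (0:Space) ((1+S)^(-(n/3)))).indicator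
                (fun z => ENNReal.ofReal ‖z‖⁻¹) (x - y))
            + ENNReal.ofReal ((1+S)^(-(n/3)))⁻¹ * (ENNReal.ofReal M * ENNReal.ofReal M) :=
            hred _ hR0
        _ ≤ ((∫⁻ x, f x ^ (1+1/n)) * ENNReal.ofReal (cB * ((1+S)^(-(n/3)))^(3-(n+1)/2)))
              ^ (2/(n+1))
            * ((∫⁻ x, f x ^ (1+1/n)) * (∫⁻ x, f x ^ (1+1/n))) ^ ((n-1)/(n+1))
            + ENNReal.ofReal ((1+S)^(-(n/3)))⁻¹ * (ENNReal.ofReal M * ENNReal.ofReal M) :=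
            add_le_add_left hnear _
        _ ≤ (ENNReal.ofReal (KT*(1+S)) * ENNReal.ofReal (cB * ((1+S)^(-(n/3)))^(3-(n+1)/2)))
              ^ (2/(n+1))
            * (ENNReal.ofReal (KT*(1+S)) * ENNReal.ofReal (KT*(1+S))) ^ ((n-1)/(n+1))
            + ENNReal.ofReal ((1+S)^(-(n/3)))⁻¹ * (ENNReal.ofReal M * ENNReal.ofReal M) := by
            refine add_le_add_left (mul_le_mul' ?_ ?_) _
            · exact ENNReal.rpow_le_rpow (mul_le_mul_left hT _)
                (div_nonneg (by norm_num) (by linarith))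
            · exact ENNReal.rpow_le_rpow (mul_le_mul' hT hT)
                (div_nonneg (by linarith) (by linarith))
        _ = ENNReal.ofReal (((KT*(1+S)) * (cB * ((1+S)^(-(n/3)))^(3-(n+1)/2)))^(2/(n+1))
              * ((KT*(1+S)) * (KT*(1+S)))^((n-1)/(n+1))
              + ((1+S)^(-(n/3)))⁻¹ * (M*M)) := by
            have hKTσ : (0:ℝ) ≤ KT*(1+S) := mul_nonneg hKT.le hσ0.le
            have hcBR : (0:ℝ) ≤ cB * ((1+S)^(-(n/3)))^(3-(n+1)/2) :=
              mul_nonneg hcB.le (Real.rpow_nonneg hR0.le _)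
            have hnn1 : (0:ℝ) ≤ (n-1)/(n+1) := by
              apply div_nonneg <;> linarith
            have he1 : (0:ℝ) ≤ 2/(n+1) := div_nonneg (by norm_num) (by linarith)
            rw [ENNReal.ofReal_add (mul_nonneg (Real.rpow_nonneg (mul_nonneg hKTσ hcBR) _)
                (Real.rpow_nonneg (mul_nonneg hKTσ hKTσ) _))
                (mul_nonneg (inv_nonneg.2 hR0.le) (mul_nonneg hM.le hM.le)),
              ENNReal.ofReal_mul (Real.rpow_nonneg (mul_nonneg hKTσ hcBR) _),
              ENNReal.ofReal_mul (inv_nonneg.2 hR0.le),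
              ENNReal.ofReal_mul hM.le,
              ← ENNReal.ofReal_rpow_of_nonneg (mul_nonneg hKTσ hcBR) he1,
              ← ENNReal.ofReal_rpow_of_nonneg (mul_nonneg hKTσ hKTσ) hnn1,
              ENNReal.ofReal_mul hKTσ, ENNReal.ofReal_mul hKTσ]
        _ ≤ ENNReal.ofReal (((KT*cB)^(2/(n+1)) * (KT*KT)^((n-1)/(n+1)) + M*M)
              * (1 + S^(n/3))) :=
            ENNReal.ofReal_le_ofReal (finalB n M KT cB S hn0 hn3 hM hKT hcB hS0)
    have hrhs0 : (0:ℝ) ≤ ((KT*cB)^(2/(n+1)) * (KT*KT)^((n-1)/(n+1)) + M*M) * (1 + S^(n/3)) := by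
      have := Real.rpow_nonneg hS0 (n/3)
      positivity
    have hIle := (ENNReal.ofReal_le_ofReal_iff hrhs0).1 hchain
    have hSn : 0 ≤ S^(n/3) := Real.rpow_nonneg hS0 _
    nlinarith [hIle]

end Main

/-- There are constants `C₁, C₂ > 0` such that
`H_C^r(ρ) ≥ ∫ Φ(ρ) - C₁ - C₂ (∫ Φ(ρ))^{n/3}` for all `ρ ∈ F_M^r`; in particular
`h_M^r > -∞`, i.e. `H_C^r` is bounded from below on `F_M^r`. -/
theorem HCr_lower_bound (Φ Φ' : ℝ → ℝ) (n n' : ℝ) (hΦ : PhiHyp Φ Φ' n n')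
    (M : ℝ) (hM : 0 < M) :
    (∃ C₁ > (0:ℝ), ∃ C₂ > (0:ℝ), ∀ ρ ∈ FMr Φ M,
      (∫ x : Space, Φ (ρ x)) - C₁ - C₂ * (∫ x : Space, Φ (ρ x)) ^ (n/3) ≤ HCr Φ ρ) ∧
    BddBelow (HCr Φ '' FMr Φ M) := by
  have hn0 := hΦ.n_pos
  have hn3 := hΦ.n_lt_three
  have hΦnn := Phi_nonneg hΦ
  obtain ⟨C, hC, hmain⟩ := main_estimate Φ Φ' n n' hΦ M hM
  have hpart : ∃ C₁ > (0:ℝ), ∃ C₂ > (0:ℝ), ∀ ρ ∈ FMr Φ M,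
      (∫ x : Space, Φ (ρ x)) - C₁ - C₂ * (∫ x : Space, Φ (ρ x)) ^ (n/3) ≤ HCr Φ ρ := by
    refine ⟨C/2 + 1, by positivity, C/2 + 1, by positivity, ?_⟩
    intro ρ hρ
    obtain ⟨h0, hInt, hΦInt, hMeq⟩ := hρ
    have hI := hmain ρ ⟨h0, hInt, hΦInt, hMeq⟩
    have hS0 : 0 ≤ ∫ x : Space, Φ (ρ x) := integral_nonneg fun x => hΦnn _ (h0 x)
    have hSn : 0 ≤ (∫ x : Space, Φ (ρ x)) ^ (n/3) := Real.rpow_nonneg hS0 _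
    have hHC : HCr Φ ρ = (∫ x : Space, Φ (ρ x))
        - (1/2) * ∫ x : Space, ∫ y : Space, ρ x * ρ y / ‖x - y‖ := by
      rw [HCr, Epot]; ring
    rw [hHC]
    nlinarith [hI]
  refine ⟨hpart, ?_⟩
  obtain ⟨C₁, hC₁, C₂, hC₂, hbd⟩ := hpart
  refine ⟨-C₁ - C₂ * (max ((2*C₂)^(3/(3-n))) 1)^(n/3), ?_⟩
  rintro v ⟨ρ, hρ, rfl⟩
  have h1 := hbd ρ hρ
  obtain ⟨h0, hInt, hΦInt, hMeq⟩ := hρ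
  set S := ∫ x : Space, Φ (ρ x) with hSdef
  have hS0 : 0 ≤ S := integral_nonneg fun x => hΦnn _ (h0 x)
  set S₀ : ℝ := max ((2*C₂)^(3/(3-n))) 1 with hS₀def
  have hS₀0 : (0:ℝ) < S₀ := lt_of_lt_of_le one_pos (le_max_right _ _)
  have hkey : -(C₂ * S₀^(n/3)) ≤ S - C₂ * S^(n/3) := by
    rcases le_total S S₀ with h | h
    · have h2 : S^(n/3) ≤ S₀^(n/3) := Real.rpow_le_rpow hS0 h (by positivity)
      nlinarith
    · have hS1 : (1:ℝ) ≤ S := le_trans (le_max_right _ _) h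
      have hSpos : (0:ℝ) < S := by linarith
      have h2C : (2*C₂)^(3/(3-n)) ≤ S := le_trans (le_max_left _ _) h
      have h3n : (0:ℝ) < 3 - n := by linarith
      have hexp : 2*C₂ ≤ S^((3-n)/3) := by
        calc 2*C₂ = ((2*C₂)^(3/(3-n)))^((3-n)/3) := by
              rw [← Real.rpow_mul (by positivity),
                show (3/(3-n))*((3-n)/3) = 1 by field_simp, Real.rpow_one]
          _ ≤ S^((3-n)/3) := Real.rpow_le_rpow (by positivity) h2C
              (div_nonneg h3n.le (by norm_num))
      have hmul := mul_le_mul_of_nonneg_right hexp (Real.rpow_nonneg hSpos.le (n/3))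
      rw [← Real.rpow_add hSpos, show (3-n)/3 + n/3 = 1 by ring, Real.rpow_one] at hmul
      have hpos : 0 ≤ C₂ * S₀^(n/3) := mul_nonneg hC₂.le (Real.rpow_nonneg hS₀0.le _)
      linarith
  linarith
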